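/- Let A be a reducible 3×3 nonnegative matrix with all eigenvalues having positive real part, and assume λ₃(A) ∈ ℝ. Then A − λ₃(A)I is nonnegative and has rank at most 2. -/

import Mathlib

open Matrix

/-- Spectrum membership for matrices over a field in terms of determinants. -/
lemma aux_mem_spectrum_iff {K : Type*} [Field K] (M : Matrix (Fin 3) (Fin 3) K) (z : K) :
    z ∈ spectrum K M ↔ (z • (1 : Matrix (Fin 3) (Fin 3) K) - M).det = 0 := by
  rw [spectrum.mem_iff, Matrix.isUnit_iff_isUnit_det, isUnit_iff_ne_zero, not_ne_iff,
    Algebra.algebraMap_eq_smul_one]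

/-- Key analytic lemma: if the characteristic polynomial factors as stated, then `μ` is
at most each of `e`, `a`, `d`. -/
lemma aux_key (M : Matrix (Fin 3) (Fin 3) ℂ) (e a b c d μ : ℝ)
    (hb : 0 ≤ b) (hc : 0 ≤ c)
    (hdet : ∀ z : ℂ, (z • (1 : Matrix (Fin 3) (Fin 3) ℂ) - M).det
      = (z - (e : ℂ)) * ((z - (a : ℂ)) * (z - (d : ℂ)) - (b : ℂ) * (c : ℂ)))
    (hspec : ∀ ν ∈ spectrum ℂ M, 0 < ν.re)
    (hmin : ∀ ν ∈ spectrum ℂ M, |μ| ≤ ‖ν‖)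
    (hμpos : 0 < μ) : μ ≤ e ∧ μ ≤ a ∧ μ ≤ d := by
  set Δ : ℝ := (a - d) ^ 2 + 4 * (b * c) with hΔdef
  have hΔ : 0 ≤ Δ := by positivity
  set s : ℝ := Real.sqrt Δ with hsdef
  have hs2 : s ^ 2 = Δ := Real.sq_sqrt hΔ
  have hsabs : |a - d| ≤ s := by
    rw [hsdef, ← Real.sqrt_sq_eq_abs]
    apply Real.sqrt_le_sqrt
    nlinarith
  set r : ℝ := (a + d - s) / 2 with hrdef
  have hroot : (r - a) * (r - d) - b * c = 0 := by
    rw [hrdef]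
    field_simp
    nlinarith [hs2]
  have hemem : (e : ℂ) ∈ spectrum ℂ M := by
    rw [aux_mem_spectrum_iff, hdet]
    ring
  have hrmem : (r : ℂ) ∈ spectrum ℂ M := by
    rw [aux_mem_spectrum_iff, hdet]
    have : ((r : ℂ) - (a : ℂ)) * ((r : ℂ) - (d : ℂ)) - (b : ℂ) * (c : ℂ) = 0 := by
      push_cast [← Complex.ofReal_sub, ← Complex.ofReal_mul]
      exact_mod_cast congrArg (fun x : ℝ => (x : ℂ)) hroot
    rw [this, mul_zero]
  have hepos : 0 < e := by simpa using hspec _ hemem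
  have hrpos : 0 < r := by simpa using hspec _ hrmem
  have hμe : μ ≤ e := by
    have := hmin _ hemem
    rwa [Complex.norm_real, Real.norm_eq_abs, abs_of_pos hμpos, abs_of_pos hepos] at this
  have hμr : μ ≤ r := by
    have := hmin _ hrmem
    rwa [Complex.norm_real, Real.norm_eq_abs, abs_of_pos hμpos, abs_of_pos hrpos] at this
  have h1 := le_abs_self (a - d)
  have h2 := neg_abs_le (a - d)
  refine ⟨hμe, ?_, ?_⟩
  · have hra : r ≤ a := by rw [hrdef]; linarith
    linarith
  · have hrd : r ≤ d := by rw [hrdef]; linarith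
    linarith

/-- If `A` is a reducible 3×3 nonnegative matrix all of whose eigenvalues
have positive real part, and its eigenvalue `μ` of smallest absolute value is real, then
`A - μ I` is nonnegative of rank at most 2. -/
theorem reducible_3x3_sub_smallest_eigenvalue_nonneg_rank_le_two
    (A : Matrix (Fin 3) (Fin 3) ℝ) (hA : ∀ i j, 0 ≤ A i j)
    (hred : ∃ (σ : Equiv.Perm (Fin 3)) (k : ℕ), 0 < k ∧ k < 3 ∧
      ∀ i j : Fin 3, k ≤ (i : ℕ) → (j : ℕ) < k → A (σ i) (σ j) = 0)
    (hspec : ∀ ν ∈ spectrum ℂ (A.map (fun x : ℝ => (x : ℂ))), 0 < ν.re)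
    (μ : ℝ) (hμ : μ ∈ spectrum ℝ A)
    (hmin : ∀ ν ∈ spectrum ℂ (A.map (fun x : ℝ => (x : ℂ))), |μ| ≤ ‖ν‖) :
    (∀ i j, 0 ≤ (A - μ • (1 : Matrix (Fin 3) (Fin 3) ℝ)) i j) ∧
    (A - μ • (1 : Matrix (Fin 3) (Fin 3) ℝ)).rank ≤ 2 := by
  obtain ⟨σ, k, hk0, hk3, hz⟩ := hred
  set M : Matrix (Fin 3) (Fin 3) ℂ := A.map (fun x : ℝ => (x : ℂ)) with hMdef
  -- determinant of `μ • 1 - A` vanishes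
  have hdetμ : ((μ : ℝ) • (1 : Matrix (Fin 3) (Fin 3) ℝ) - A).det = 0 :=
    (aux_mem_spectrum_iff A μ).mp hμ
  -- `μ` belongs to the complex spectrum
  have hmap : ((μ : ℝ) • (1 : Matrix (Fin 3) (Fin 3) ℝ) - A).map (fun x : ℝ => (x : ℂ))
      = (μ : ℂ) • (1 : Matrix (Fin 3) (Fin 3) ℂ) - M := by
    ext i j
    by_cases h : i = j <;>
      simp [h, hMdef, Matrix.map_apply, Matrix.sub_apply, Matrix.smul_apply, Matrix.one_apply]
  have hμC : (μ : ℂ) ∈ spectrum ℂ M := by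
    rw [aux_mem_spectrum_iff, ← hmap]
    have h : ((μ • (1 : Matrix (Fin 3) (Fin 3) ℝ) - A).map (fun x : ℝ => (x : ℂ))).det
        = (((μ • (1 : Matrix (Fin 3) (Fin 3) ℝ) - A)).det : ℂ) := by
      rw [show (fun x : ℝ => (x : ℂ)) = ⇑Complex.ofRealHom from rfl,
        ← RingHom.mapMatrix_apply, ← RingHom.map_det]
      rfl
    rw [h, hdetμ]
    simp
  have hμpos : 0 < μ := by simpa using hspec _ hμC
  -- the determinant factorization from reducibility
  have hcase : k = 1 ∨ k = 2 := by omega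
  have hdiag : μ ≤ A (σ 0) (σ 0) ∧ μ ≤ A (σ 1) (σ 1) ∧ μ ≤ A (σ 2) (σ 2) := by
    rcases hcase with hk | hk
    · -- k = 1 : zeros at (1,0) and (2,0)
      have h10 : A (σ 1) (σ 0) = 0 := hz 1 0 (by rw [hk]; decide) (by rw [hk]; decide)
      have h20 : A (σ 2) (σ 0) = 0 := hz 2 0 (by rw [hk]; decide) (by rw [hk]; decide)
      have hdet : ∀ z : ℂ, (z • (1 : Matrix (Fin 3) (Fin 3) ℂ) - M).det
          = (z - (A (σ 0) (σ 0) : ℂ)) * ((z - (A (σ 1) (σ 1) : ℂ)) * (z - (A (σ 2) (σ 2) : ℂ))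
            - (A (σ 1) (σ 2) : ℂ) * (A (σ 2) (σ 1) : ℂ)) := by
        intro z
        rw [← Matrix.det_submatrix_equiv_self σ, Matrix.det_fin_three]
        simp [Matrix.sub_apply, Matrix.smul_apply, Matrix.one_apply, Matrix.submatrix_apply,
          hMdef, Matrix.map_apply, h10, h20, Equiv.apply_eq_iff_eq]
        ring
      have := aux_key M (A (σ 0) (σ 0)) (A (σ 1) (σ 1)) (A (σ 1) (σ 2)) (A (σ 2) (σ 1))
        (A (σ 2) (σ 2)) μ (hA _ _) (hA _ _) hdet hspec hmin hμpos
      exact ⟨this.1, this.2.1, this.2.2⟩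
    · -- k = 2 : zeros at (2,0) and (2,1)
      have h20 : A (σ 2) (σ 0) = 0 := hz 2 0 (by rw [hk]; decide) (by rw [hk]; decide)
      have h21 : A (σ 2) (σ 1) = 0 := hz 2 1 (by rw [hk]; decide) (by rw [hk]; decide)
      have hdet : ∀ z : ℂ, (z • (1 : Matrix (Fin 3) (Fin 3) ℂ) - M).det
          = (z - (A (σ 2) (σ 2) : ℂ)) * ((z - (A (σ 0) (σ 0) : ℂ)) * (z - (A (σ 1) (σ 1) : ℂ))
            - (A (σ 0) (σ 1) : ℂ) * (A (σ 1) (σ 0) : ℂ)) := by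
        intro z
        rw [← Matrix.det_submatrix_equiv_self σ, Matrix.det_fin_three]
        simp [Matrix.sub_apply, Matrix.smul_apply, Matrix.one_apply, Matrix.submatrix_apply,
          hMdef, Matrix.map_apply, h20, h21, Equiv.apply_eq_iff_eq]
        ring
      have := aux_key M (A (σ 2) (σ 2)) (A (σ 0) (σ 0)) (A (σ 0) (σ 1)) (A (σ 1) (σ 0))
        (A (σ 1) (σ 1)) μ (hA _ _) (hA _ _) hdet hspec hmin hμpos
      exact ⟨this.2.1, this.2.2, this.1⟩
  have hdiagσ : ∀ j : Fin 3, μ ≤ A (σ j) (σ j) := by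
    intro j
    fin_cases j
    · exact hdiag.1
    · exact hdiag.2.1
    · exact hdiag.2.2
  have hdiag' : ∀ i : Fin 3, μ ≤ A i i := by
    intro i
    have h := hdiagσ (σ.symm i)
    rwa [Equiv.apply_symm_apply] at h
  constructor
  · intro i j
    by_cases h : i = j
    · subst h
      have := hdiag' i
      simp [Matrix.sub_apply, Matrix.smul_apply, Matrix.one_apply]
      linarith
    · have := hA i j
      simp [Matrix.sub_apply, Matrix.smul_apply, Matrix.one_apply, h]
      linarith
  · have hdet0 : (A - μ • (1 : Matrix (Fin 3) (Fin 3) ℝ)).det = 0 := by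
      rw [show A - μ • (1 : Matrix (Fin 3) (Fin 3) ℝ)
          = -((μ : ℝ) • (1 : Matrix (Fin 3) (Fin 3) ℝ) - A) by abel, Matrix.det_neg, hdetμ]
      simp
    have hne : LinearMap.range (A - μ • (1 : Matrix (Fin 3) (Fin 3) ℝ)).mulVecLin ≠ ⊤ := by
      intro htop
      have hsurj : Function.Surjective
          ((A - μ • (1 : Matrix (Fin 3) (Fin 3) ℝ)).mulVec) := by
        intro v
        obtain ⟨w, hw⟩ := LinearMap.range_eq_top.mp htop v
        exact ⟨w, hw⟩
      have hu := Matrix.mulVec_surjective_iff_isUnit.mp hsurj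
      rw [Matrix.isUnit_iff_isUnit_det, hdet0] at hu
      exact (by simp : ¬ IsUnit (0 : ℝ)) hu
    have hlt := Submodule.finrank_lt (K := ℝ) (V := Fin 3 → ℝ)
      hne
    rw [Matrix.rank]
    have h3 : Module.finrank ℝ (Fin 3 → ℝ) = 3 := by simp
    omega
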